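/- Let Q be the n×n generalized symmetric channel matrix with crossover probability q ∈ [0,1/n) and R an n×n stochastic matrix. If max over s ≠ ŝ with Σ_{s'} R(s',ŝ) > 0 of R(s,ŝ)/Σ_{s'} R(s',ŝ) ≤ q, then the matrix Q⁻¹·R (with rows and columns indexed appropriately so that the (s,ŝ) entry involves R(s,ŝ)) is a nonsingular M-matrix: its off-diagonal entries are nonpositive and its row sums equal 1. -/

import Mathlib

/-- If every normalized off-diagonal entry of the stochastic matrix `R`
(with positive column sum) is at most `q`, then `Q⁻¹ * R` has nonpositive
off-diagonal entries and row sums equal to 1 (nonsingular M-matrix structure). -/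
theorem gs_inv_mul_M_matrix (n : ℕ) (hn : 1 ≤ n) (q : ℝ)
    (hq : q ∈ Set.Ico (0:ℝ) (1 / n))
    (R : Matrix (Fin n) (Fin n) ℝ)
    (hRnn : ∀ s t, 0 ≤ R s t) (hRsum : ∀ s, ∑ t, R s t = 1)
    (hmax : ∀ s t : Fin n, s ≠ t → 0 < ∑ s', R s' t →
      R s t / ∑ s', R s' t ≤ q) :
    (∀ s t : Fin n, s ≠ t →
        ((Matrix.of (fun s t : Fin n =>
            if s = t then 1 - (n - 1 : ℝ) * q else q))⁻¹ * R) s t ≤ 0) ∧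
    (∀ s : Fin n, ∑ t, ((Matrix.of (fun s t : Fin n =>
            if s = t then 1 - (n - 1 : ℝ) * q else q))⁻¹ * R) s t = 1) := by
  set Q : Matrix (Fin n) (Fin n) ℝ := Matrix.of (fun s t : Fin n =>
      if s = t then 1 - (n - 1 : ℝ) * q else q) with hQdef
  have hnpos : (0:ℝ) < n := by exact_mod_cast Nat.lt_of_lt_of_le Nat.zero_lt_one hn
  have hc : (n:ℝ) * q - 1 < 0 := by
    have : (n:ℝ) * q < (n:ℝ) * (1 / n) := by
      rcases lt_or_eq_of_le hq.1 with h | h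
      · exact mul_lt_mul_of_pos_left hq.2 hnpos
      · rw [← h]; simp; positivity
    rw [mul_one_div, div_self (ne_of_gt hnpos)] at this
    linarith
  set c : ℝ := (n:ℝ) * q - 1 with hcdef
  have hc0 : c ≠ 0 := ne_of_lt hc
  set Qi : Matrix (Fin n) (Fin n) ℝ := Matrix.of (fun s t : Fin n =>
      if s = t then (q - 1) / c else q / c) with hQidef
  -- Q * Qi = 1
  have hmulk : ∀ s t : Fin n, (Q * Qi) s t = if s = t then 1 else 0 := by
    intro s t
    rw [Matrix.mul_apply]
    have key : ∀ k : Fin n, Q s k * Qi k t =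
        q * (q / c) + (if s = k then (1 - (n:ℝ) * q) * (q / c) else 0)
          + (if k = t then q * (-1 / c) else 0)
          + (if k = s then (if s = t then (1 - (n:ℝ) * q) * (-1 / c) else 0) else 0) := by
      intro k
      simp only [hQdef, hQidef, Matrix.of_apply]
      by_cases h1 : s = k <;> by_cases h2 : k = t <;> by_cases h3 : s = t <;>
        simp only [h1, h2, h3, if_true, if_false, eq_comm (a := k), ite_true, ite_false] <;>
        subst_vars <;> simp_all <;> (try field_simp) <;> ring
    rw [Finset.sum_congr rfl (fun k _ => key k)]
    simp only [Finset.sum_add_distrib, Finset.sum_const, Finset.card_univ,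
      Fintype.card_fin, nsmul_eq_mul, Finset.sum_ite_eq, Finset.sum_ite_eq',
      Finset.mem_univ, if_true]
    by_cases h : s = t
    · simp only [h, if_true]
      field_simp
      ring
    · simp only [h, if_false]
      field_simp
      ring
  have hQinv : Q⁻¹ = Qi := by
    apply Matrix.inv_eq_right_inv
    ext s t
    rw [hmulk s t, Matrix.one_apply]
  -- column sums
  have col_nonneg : ∀ t, (0:ℝ) ≤ ∑ s', R s' t := fun t =>
    Finset.sum_nonneg fun s' _ => hRnn s' t
  -- entry formula for Qi * R
  have hentry : ∀ s t : Fin n, (Qi * R) s t = (q * (∑ s', R s' t) - R s t) / c := by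
    intro s t
    rw [Matrix.mul_apply]
    have key : ∀ k : Fin n, Qi s k * R k t =
        (q / c) * R k t + (if k = s then (-1 / c) * R s t else 0) := by
      intro k
      simp only [hQidef, Matrix.of_apply]
      by_cases h1 : s = k
      · subst h1; simp; field_simp; ring
      · simp [h1, Ne.symm h1]
    rw [Finset.sum_congr rfl (fun k _ => key k)]
    rw [Finset.sum_add_distrib, ← Finset.mul_sum, Finset.sum_ite_eq',
      if_pos (Finset.mem_univ s)]
    field_simp
    ring
  constructor
  · intro s t hst
    rw [hQinv, hentry s t]
    rcases lt_or_eq_of_le (col_nonneg t) with hpos | hzero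
    · have h1 : R s t / ∑ s', R s' t ≤ q := hmax s t hst hpos
      have h2 : R s t ≤ q * ∑ s', R s' t := by
        rw [div_le_iff₀ hpos] at h1; linarith
      have : 0 ≤ q * (∑ s', R s' t) - R s t := by linarith
      exact div_nonpos_of_nonneg_of_nonpos this (le_of_lt hc)
    · have hsum0 : ∑ s', R s' t = 0 := hzero.symm
      have hRst : R s t = 0 := by
        have := (Finset.sum_eq_zero_iff_of_nonneg (fun s' _ => hRnn s' t)).mp hsum0
        exact this s (Finset.mem_univ s)
      rw [hsum0, hRst]
      simp
  · intro s
    rw [hQinv]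
    have : ∀ t, (Qi * R) s t = ∑ k, Qi s k * R k t := fun t => Matrix.mul_apply
    rw [Finset.sum_congr rfl (fun t _ => this t), Finset.sum_comm]
    have hrow : ∀ k : Fin n, ∑ t, Qi s k * R k t = Qi s k := by
      intro k
      rw [← Finset.mul_sum, hRsum k, mul_one]
    rw [Finset.sum_congr rfl (fun k _ => hrow k)]
    have key : ∀ k : Fin n, Qi s k = q / c + (if k = s then -1 / c else 0) := by
      intro k
      simp only [hQidef, Matrix.of_apply]
      by_cases h1 : s = k
      · subst h1; simp; field_simp; ring
      · simp [h1, Ne.symm h1]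
    rw [Finset.sum_congr rfl (fun k _ => key k)]
    rw [Finset.sum_add_distrib, Finset.sum_const, Finset.sum_ite_eq',
      if_pos (Finset.mem_univ s)]
    simp only [Finset.card_univ, Fintype.card_fin, nsmul_eq_mul]
    field_simp
    ring
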